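/- For a monoid H, the reduced finitary power monoid P_{fin,1}(H) is atomic if and only if H has no unit of order two and the only idempotent element of H is the identity 1_H. -/
import Mathlib


open scoped Pointwise

/-- Two-sided divisibility in a monoid: `x` divides `y` if `y = u * x * v` for some `u, v`. -/
def DvdTS {M : Type*} [Monoid M] (x y : M) : Prop := ∃ u v : M, y = u * x * v

/-- A unit-divisor is a divisor of the identity. -/
def IsUnitDivisor {M : Type*} [Monoid M] (x : M) : Prop := DvdTS x 1

/-- `x` is a proper divisor of `y` if `x` divides `y` but `y` does not divide `x`. -/
def IsProperDivisorTS {M : Type*} [Monoid M] (x y : M) : Prop := DvdTS x y ∧ ¬ DvdTS y x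

/-- An atom is a non-unit that is not a product of two non-units. -/
def IsAtomTS {M : Type*} [Monoid M] (a : M) : Prop :=
  ¬ IsUnit a ∧ ∀ b c : M, a = b * c → IsUnit b ∨ IsUnit c

/-- A quark is a non-unit-divisor all of whose proper divisors are unit-divisors. -/
def IsQuarkTS {M : Type*} [Monoid M] (a : M) : Prop :=
  ¬ IsUnitDivisor a ∧ ∀ b : M, IsProperDivisorTS b a → IsUnitDivisor b

/-- An irreducible is a non-unit-divisor with no factorization `a = b * c` into proper
divisors that are not unit-divisors. -/
def IsIrredTS {M : Type*} [Monoid M] (a : M) : Prop :=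
  ¬ IsUnitDivisor a ∧
    ¬ ∃ b c : M, a = b * c ∧ IsProperDivisorTS b a ∧ IsProperDivisorTS c a ∧
      ¬ IsUnitDivisor b ∧ ¬ IsUnitDivisor c

def DedekindFiniteM (M : Type*) [Monoid M] : Prop := ∀ x y : M, x * y = 1 → y * x = 1

/-- ACC on principal two-sided ideals: no infinite sequence of consecutive proper divisors. -/
def ACCPrincipalTS (M : Type*) [Monoid M] : Prop :=
  ¬ ∃ f : ℕ → M, ∀ n : ℕ, IsProperDivisorTS (f (n + 1)) (f n)

/-- Factorable: every non-unit-divisor is a (non-empty) product of irreducibles. -/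
def FactorableM (M : Type*) [Monoid M] : Prop :=
  ∀ x : M, ¬ IsUnitDivisor x →
    ∃ l : List M, l ≠ [] ∧ (∀ a ∈ l, IsIrredTS a) ∧ l.prod = x

/-- Atomic: every non-unit-divisor is a (non-empty) product of atoms. -/
def AtomicM (M : Type*) [Monoid M] : Prop :=
  ∀ x : M, ¬ IsUnitDivisor x →
    ∃ l : List M, l ≠ [] ∧ (∀ a ∈ l, IsAtomTS a) ∧ l.prod = x

/-- The finitary power monoid: non-empty finite subsets of `H` under setwise multiplication. -/
def PfinM (H : Type*) [Monoid H] : Submonoid (Set H) where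
  carrier := {X : Set H | X.Finite ∧ X.Nonempty}
  mul_mem' := fun hX hY => ⟨hX.1.mul hY.1, hX.2.mul hY.2⟩
  one_mem' := ⟨Set.finite_one, 1, Set.mem_one.mpr rfl⟩

/-- The restricted finitary power monoid: non-empty finite subsets of `H` containing a unit. -/
def PfinTimes (H : Type*) [Monoid H] : Submonoid (Set H) where
  carrier := {X : Set H | X.Finite ∧ ∃ u ∈ X, IsUnit u}
  mul_mem' := by
    rintro X Y ⟨hXf, u, hu, hu'⟩ ⟨hYf, v, hv, hv'⟩
    exact ⟨hXf.mul hYf, u * v, Set.mul_mem_mul hu hv, hu'.mul hv'⟩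
  one_mem' := ⟨Set.finite_one, 1, Set.mem_one.mpr rfl, isUnit_one⟩

/-- The reduced finitary power monoid: finite subsets of `H` containing `1`. -/
def PfinOne (H : Type*) [Monoid H] : Submonoid (Set H) where
  carrier := {X : Set H | X.Finite ∧ (1 : H) ∈ X}
  mul_mem' := by
    rintro X Y ⟨hXf, hX1⟩ ⟨hYf, hY1⟩
    exact ⟨hXf.mul hYf, by simpa using Set.mul_mem_mul hX1 hY1⟩
  one_mem' := ⟨Set.finite_one, Set.mem_one.mpr rfl⟩

lemma mem_PfinM {H : Type*} [Monoid H] {X : Set H} :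
    X ∈ PfinM H ↔ X.Finite ∧ X.Nonempty := Iff.rfl

lemma mem_PfinTimes {H : Type*} [Monoid H] {X : Set H} :
    X ∈ PfinTimes H ↔ X.Finite ∧ ∃ u ∈ X, IsUnit u := Iff.rfl

lemma mem_PfinOne {H : Type*} [Monoid H] {X : Set H} :
    X ∈ PfinOne H ↔ X.Finite ∧ (1 : H) ∈ X := Iff.rfl

/-- Acyclic: `u * x * v ≠ x` whenever `u` or `v` is a non-unit. -/
def AcyclicM (M : Type*) [Monoid M] : Prop :=
  ∀ u v x : M, (¬ IsUnit u ∨ ¬ IsUnit v) → u * x * v ≠ x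

/-- Unit-cancellative: `x * y ≠ x ≠ y * x` whenever `y` is a non-unit. -/
def UnitCancellativeM (M : Type*) [Monoid M] : Prop :=
  ∀ x y : M, ¬ IsUnit y → x * y ≠ x ∧ y * x ≠ x

/-- Strongly unit-cancellative: `x * y ≠ x ≠ y * x` whenever `y ≠ 1`. -/
def StrongUnitCancellativeM (M : Type*) [Monoid M] : Prop :=
  ∀ x y : M, y ≠ 1 → x * y ≠ x ∧ y * x ≠ x

/-- Torsion-free: the identity is the only element with finitely many powers. -/
def TorsionFreeM (M : Type*) [Monoid M] : Prop :=
  ∀ x : M, (Set.range fun k : ℕ => x ^ k).Finite → x = 1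

/-- Cancellative monoid. -/
def CancellativeM (M : Type*) [Monoid M] : Prop :=
  ∀ a x y : M, (a * x = a * y → x = y) ∧ (x * a = y * a → x = y)

/-- The set of lengths of (irreducible) factorizations of `x`, with the conventions
`L(1) = {0}` and `L(u) = ∅` for a unit-divisor `u ≠ 1`. -/
def LengthSet {M : Type*} [Monoid M] (x : M) : Set ℕ :=
  {n | (x = 1 ∧ n = 0) ∨
    (¬ IsUnitDivisor x ∧
      ∃ l : List M, l.length = n ∧ l ≠ [] ∧ (∀ a ∈ l, IsIrredTS a) ∧ l.prod = x)}

/-- The system of lengths: the family of non-empty length sets. -/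
def SystemOfLengths (M : Type*) [Monoid M] : Set (Set ℕ) :=
  {L | L.Nonempty ∧ ∃ x : M, LengthSet x = L}

section AuxPfinOne

variable {H : Type*} [Monoid H]

lemma pf_one_mem (X : PfinOne H) : (1 : H) ∈ (X : Set H) := X.2.2

lemma pf_fin (X : PfinOne H) : (X : Set H).Finite := X.2.1

lemma pf_coe_one : ((1 : PfinOne H) : Set H) = {1} := by
  rfl

lemma pf_coe_mul (X Y : PfinOne H) :
    ((X * Y : PfinOne H) : Set H) = (X : Set H) * (Y : Set H) := rfl

lemma pf_eq_iff {X Y : PfinOne H} : X = Y ↔ (X : Set H) = (Y : Set H) :=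
  ⟨congrArg _, Subtype.ext⟩

lemma pf_subset_mul_left (X Y : PfinOne H) :
    (X : Set H) ⊆ ((X * Y : PfinOne H) : Set H) := by
  intro x hx
  have : x * 1 ∈ (X : Set H) * (Y : Set H) := Set.mul_mem_mul hx (pf_one_mem Y)
  simpa [pf_coe_mul] using this

lemma pf_subset_mul_right (X Y : PfinOne H) :
    (Y : Set H) ⊆ ((X * Y : PfinOne H) : Set H) := by
  intro y hy
  have : 1 * y ∈ (X : Set H) * (Y : Set H) := Set.mul_mem_mul (pf_one_mem X) hy
  simpa [pf_coe_mul] using this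

lemma pf_unitDivisor_iff {X : PfinOne H} : IsUnitDivisor X ↔ X = 1 := by
  constructor
  · rintro ⟨U, V, h⟩
    apply pf_eq_iff.mpr
    have hsub : (X : Set H) ⊆ ((U * X * V : PfinOne H) : Set H) :=
      fun x hx => pf_subset_mul_left (U * X) V (pf_subset_mul_right U X hx)
    rw [← h, pf_coe_one] at hsub
    rw [pf_coe_one]
    exact Set.Subset.antisymm hsub (by simpa using pf_one_mem X)
  · rintro rfl
    exact ⟨1, 1, by simp⟩

lemma pf_isUnit_iff {X : PfinOne H} : IsUnit X ↔ X = 1 := by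
  constructor
  · rintro ⟨u, rfl⟩
    apply pf_eq_iff.mpr
    have h : (u : PfinOne H) * ↑u⁻¹ = 1 := u.mul_inv
    have hsub : ((u : PfinOne H) : Set H) ⊆ (((u : PfinOne H) * ↑u⁻¹ : PfinOne H) : Set H) :=
      pf_subset_mul_left _ _
    rw [h, pf_coe_one] at hsub
    rw [pf_coe_one]
    exact Set.Subset.antisymm hsub (by simpa using pf_one_mem (u : PfinOne H))
  · rintro rfl
    exact isUnit_one

/-- The doubleton `{1, x}` as an element of the reduced power monoid. -/
def Dbl (x : H) : PfinOne H :=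
  ⟨{1, x}, (Set.finite_singleton x).insert 1, Set.mem_insert 1 _⟩

lemma dbl_coe (x : H) : ((Dbl x : PfinOne H) : Set H) = {1, x} := rfl

lemma dbl_ne_one {x : H} (hx : x ≠ 1) : (Dbl x : PfinOne H) ≠ 1 := by
  intro h
  have := pf_eq_iff.mp h
  rw [dbl_coe, pf_coe_one] at this
  have hxm : x ∈ ({1, x} : Set H) := Set.mem_insert_iff.mpr (Or.inr rfl)
  rw [this] at hxm
  exact hx (by simpa using hxm)

lemma pf_subset_dbl {x : H} {Y : PfinOne H} (h : (Y : Set H) ⊆ {1, x}) :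
    Y = 1 ∨ Y = Dbl x := by
  by_cases hx : x ∈ (Y : Set H)
  · right
    apply pf_eq_iff.mpr
    rw [dbl_coe]
    refine Set.Subset.antisymm h ?_
    intro y hy
    rcases Set.mem_insert_iff.mp hy with rfl | hy
    · exact pf_one_mem Y
    · rw [Set.mem_singleton_iff.mp hy]; exact hx
  · left
    apply pf_eq_iff.mpr
    rw [pf_coe_one]
    refine Set.Subset.antisymm ?_ (by simpa using pf_one_mem Y)
    intro y hy
    rcases Set.mem_insert_iff.mp (h hy) with rfl | hy'
    · exact rfl
    · exact absurd (Set.mem_singleton_iff.mp hy' ▸ hy) hx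

lemma dbl_mul_dbl {x : H} (hsq : x * x = 1 ∨ x * x = x) :
    (Dbl x : PfinOne H) * Dbl x = Dbl x := by
  apply pf_eq_iff.mpr
  rw [pf_coe_mul, dbl_coe]
  apply Set.Subset.antisymm
  · rintro y hy
    rcases Set.mem_mul.mp hy with ⟨a, ha, b, hb, rfl⟩
    rcases Set.mem_insert_iff.mp ha with rfl | ha <;>
      rcases Set.mem_insert_iff.mp hb with rfl | hb
    · simp
    · rw [Set.mem_singleton_iff.mp hb]; simp
    · rw [Set.mem_singleton_iff.mp ha] at *; simp
    · rw [Set.mem_singleton_iff.mp ha, Set.mem_singleton_iff.mp hb]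
      rcases hsq with h | h <;> rw [h] <;> simp
  · intro y hy
    exact Set.mem_mul.mpr ⟨y, hy, 1, Set.mem_insert 1 _, mul_one y⟩

lemma pf_mem_subset_prod :
    ∀ (l : List (PfinOne H)) (a : PfinOne H), a ∈ l →
      (a : Set H) ⊆ ((l.prod : PfinOne H) : Set H) := by
  intro l
  induction l with
  | nil => intro a ha; simp at ha
  | cons b t ih =>
    intro a ha
    rw [List.prod_cons]
    rcases List.mem_cons.mp ha with rfl | h
    · exact pf_subset_mul_left _ _
    · exact (ih a h).trans (pf_subset_mul_right _ _)

lemma not_atomic_of_sq {x : H} (hx : x ≠ 1) (hsq : x * x = 1 ∨ x * x = x) :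
    ¬ AtomicM (PfinOne H) := by
  intro hA
  obtain ⟨l, hne, hat, hprod⟩ :=
    hA (Dbl x) (fun h => dbl_ne_one hx (pf_unitDivisor_iff.mp h))
  obtain ⟨a, ha⟩ := List.exists_mem_of_ne_nil l hne
  have hsub : (a : Set H) ⊆ {1, x} := by
    have := pf_mem_subset_prod l a ha
    rw [hprod, dbl_coe] at this
    exact this
  rcases pf_subset_dbl hsub with rfl | rfl
  · exact (hat _ ha).1 isUnit_one
  · rcases (hat _ ha).2 (Dbl x) (Dbl x) (dbl_mul_dbl hsq).symm with h | h <;>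
      exact dbl_ne_one hx (pf_isUnit_iff.mp h)

lemma pow_mod_eq {z : H} {d : ℕ} (h1 : z ^ d = 1) (n : ℕ) : z ^ n = z ^ (n % d) := by
  conv_lhs => rw [← Nat.div_add_mod n d]
  rw [pow_add, pow_mul, h1, one_pow, one_mul]

lemma exists_pow_eq_one (hC2 : ∀ e : H, e * e = e → e = 1) {z : H} (hz : z ≠ 1)
    {S : Set H} (hS : S.Finite) (hpow : ∀ k : ℕ, z ^ k ∈ S) :
    ∃ d : ℕ, 2 ≤ d ∧ z ^ d = 1 := by
  have hninj : ¬ Function.Injective (fun k : ℕ => z ^ k) := by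
    intro hinj
    exact (Set.infinite_of_injective_forall_mem hinj hpow) hS
  obtain ⟨i, j, hij, hne⟩ := Function.not_injective_iff.mp hninj
  -- wlog i < j
  have key : ∃ i p : ℕ, 0 < p ∧ z ^ (i + p) = z ^ i := by
    rcases Nat.lt_or_ge i j with h | h
    · exact ⟨i, j - i, by omega, by rw [show i + (j - i) = j by omega]; exact hij.symm⟩
    · have h' : j < i := lt_of_le_of_ne h (fun e => hne e.symm)
      exact ⟨j, i - j, by omega, by rw [show j + (i - j) = i by omega]; exact hij⟩
  obtain ⟨i, p, hp, hstep0⟩ := key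
  have hstep : ∀ n : ℕ, i ≤ n → z ^ (n + p) = z ^ n := by
    intro n hn
    obtain ⟨t, rfl⟩ : ∃ t, n = i + t := ⟨n - i, by omega⟩
    calc z ^ (i + t + p) = z ^ (i + p) * z ^ t := by
          rw [← pow_add]; ring_nf
      _ = z ^ i * z ^ t := by rw [hstep0]
      _ = z ^ (i + t) := by rw [← pow_add]
  have hiter : ∀ k n : ℕ, i ≤ n → z ^ (n + p * k) = z ^ n := by
    intro k
    induction k with
    | zero => intro n _; simp
    | succ k ihk =>
      intro n hn
      have : n + p * (k + 1) = (n + p * k) + p := by ring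
      rw [this, hstep _ (by omega), ihk n hn]
  have hile : i ≤ p * (i + 1) := by
    have := Nat.le_mul_of_pos_left (i + 1) hp
    omega
  have hidem : z ^ (p * (i + 1)) * z ^ (p * (i + 1)) = z ^ (p * (i + 1)) := by
    rw [← pow_add]
    exact hiter (i + 1) _ hile
  have hm1 : z ^ (p * (i + 1)) = 1 := hC2 _ hidem
  refine ⟨p * (i + 1), ?_, hm1⟩
  by_contra hlt
  push_neg at hlt
  have hge : 1 ≤ p * (i + 1) := Nat.one_le_iff_ne_zero.mpr (Nat.mul_ne_zero (by omega) (by omega))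
  have heq1 : p * (i + 1) = 1 := by omega
  rw [heq1, pow_one] at hm1
  exact hz hm1

lemma range_pow_eq_image {z : H} {d : ℕ} (hd : 0 < d) (h1 : z ^ d = 1) :
    (Set.range fun k : ℕ => z ^ k) = (fun k : ℕ => z ^ k) '' Set.Iio d := by
  apply Set.Subset.antisymm
  · rintro _ ⟨n, rfl⟩
    exact ⟨n % d, Nat.mod_lt n hd, (pow_mod_eq h1 n).symm⟩
  · rintro _ ⟨n, _, rfl⟩
    exact ⟨n, rfl⟩

lemma range_pow_finite {z : H} {d : ℕ} (hd : 0 < d) (h1 : z ^ d = 1) :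
    (Set.range fun k : ℕ => z ^ k).Finite := by
  rw [range_pow_eq_image hd h1]
  exact (Set.finite_Iio d).image _

lemma dbl_pow_set (z : H) : ∀ k : ℕ, ({1, z} : Set H) ^ k = {y | ∃ i ≤ k, y = z ^ i} := by
  intro k
  induction k with
  | zero =>
    rw [pow_zero]
    ext y
    simp only [Set.mem_one, Set.mem_setOf_eq]
    constructor
    · rintro rfl; exact ⟨0, le_refl 0, (pow_zero z).symm⟩
    · rintro ⟨i, hi, rfl⟩; rw [Nat.le_zero.mp hi, pow_zero]
  | succ k ihk =>
    rw [pow_succ, ihk]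
    ext y
    constructor
    · intro hy
      rcases Set.mem_mul.mp hy with ⟨a, ⟨i, hi, rfl⟩, b, hb, rfl⟩
      rcases Set.mem_insert_iff.mp hb with rfl | hb
      · exact ⟨i, by omega, mul_one _⟩
      · rw [Set.mem_singleton_iff.mp hb]
        exact ⟨i + 1, by omega, (pow_succ z i).symm⟩
    · rintro ⟨i, hi, rfl⟩
      rcases Nat.lt_or_ge i (k + 1) with h | h
      · exact Set.mem_mul.mpr ⟨z ^ i, ⟨i, by omega, rfl⟩, 1, Set.mem_insert 1 _, mul_one _⟩
      · have : i = k + 1 := by omega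
        subst this
        exact Set.mem_mul.mpr
          ⟨z ^ k, ⟨k, le_refl k, rfl⟩, z, Set.mem_insert_iff.mpr (Or.inr rfl),
            (pow_succ z k).symm⟩

lemma dbl_pow_eq_range {z : H} {d : ℕ} (hd : 2 ≤ d) (h1 : z ^ d = 1) :
    ({1, z} : Set H) ^ (d - 1) = (Set.range fun k : ℕ => z ^ k) := by
  rw [dbl_pow_set]
  ext y
  constructor
  · rintro ⟨i, _, rfl⟩; exact ⟨i, rfl⟩
  · rintro ⟨n, rfl⟩
    refine ⟨n % d, ?_, pow_mod_eq h1 n⟩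
    have := Nat.mod_lt n (show 0 < d by omega)
    omega

lemma coset_decomp_left {z : H} {d : ℕ} (hz : z ≠ 1) (hd : 2 ≤ d) (h1 : z ^ d = 1)
    {X : Set H} (hX1 : (1 : H) ∈ X) (hXz : ∀ x ∈ X, x * z ∈ X) :
    ∃ X' : Set H, X' ⊆ X ∧ (1 : H) ∈ X' ∧ z ∉ X' ∧
      X' * (Set.range fun k : ℕ => z ^ k) = X := by
  classical
  set G : Set H := Set.range fun k : ℕ => z ^ k with hG
  have hG1 : (1 : H) ∈ G := ⟨0, pow_zero z⟩
  have hzG : z ∈ G := ⟨1, pow_one z⟩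
  have hGmul : ∀ g ∈ G, ∀ g' ∈ G, g * g' ∈ G := by
    rintro _ ⟨a, rfl⟩ _ ⟨b, rfl⟩
    exact ⟨a + b, pow_add z a b⟩
  have hGinv : ∀ g ∈ G, ∃ g' ∈ G, g * g' = 1 ∧ g' * g = 1 := by
    rintro _ ⟨a, rfl⟩
    obtain ⟨e, rfl⟩ : ∃ e, d = e + 1 := ⟨d - 1, by omega⟩
    refine ⟨z ^ (a * e), ⟨a * e, rfl⟩, ?_, ?_⟩
    · rw [← pow_add, show a + a * e = (e + 1) * a by ring, pow_mul, h1, one_pow]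
    · rw [← pow_add, show a * e + a = (e + 1) * a by ring, pow_mul, h1, one_pow]
  have hXG : ∀ x ∈ X, ∀ g ∈ G, x * g ∈ X := by
    rintro x hx _ ⟨k, rfl⟩
    induction k with
    | zero => simpa using hx
    | succ k ihk =>
      show x * z ^ (k + 1) ∈ X
      rw [pow_succ, ← mul_assoc]
      exact hXz _ ihk
  -- cosets
  set C : H → Set H := fun x => {y | ∃ g ∈ G, y = x * g} with hC
  have hmemC : ∀ x, x ∈ C x := fun x => ⟨1, hG1, (mul_one x).symm⟩
  have hCeq : ∀ x y, y ∈ C x → C y = C x := by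
    rintro x y ⟨g, hg, rfl⟩
    apply Set.Subset.antisymm
    · rintro _ ⟨g', hg', rfl⟩
      exact ⟨g * g', hGmul g hg g' hg', mul_assoc x g g'⟩
    · rintro _ ⟨g₂, hg₂, rfl⟩
      obtain ⟨gi, hgi, hggi, _⟩ := hGinv g hg
      refine ⟨gi * g₂, hGmul gi hgi g₂ hg₂, ?_⟩
      rw [mul_assoc, ← mul_assoc g gi g₂, hggi, one_mul]
  have hC1G : C 1 = G := by
    ext y
    constructor
    · rintro ⟨g, hg, rfl⟩; rwa [one_mul]
    · intro hy; exact ⟨y, hy, (one_mul y).symm⟩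
  have hCsubX : ∀ x ∈ X, C x ⊆ X := by
    rintro x hx _ ⟨g, hg, rfl⟩
    exact hXG x hx g hg
  -- representatives
  set rep : Set H → H := fun c =>
    if z ∈ c then 1 else if hc : c.Nonempty then hc.some else 1 with hrep
  have hrep_mem : ∀ x, z ∉ C x → rep (C x) ∈ C x := by
    intro x hzx
    have hne : (C x).Nonempty := ⟨x, hmemC x⟩
    simp only [hrep, if_neg hzx, dif_pos hne]
    exact hne.some_mem
  have hrep_coset : ∀ x, x ∈ C (rep (C x)) := by
    intro x
    by_cases hzx : z ∈ C x
    · have : rep (C x) = 1 := by simp [hrep, if_pos hzx]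
      rw [this, hC1G]
      have hCz : C z = G := by
        rw [← hC1G]
        exact hCeq 1 z (by rw [hC1G]; exact hzG)
      rw [← hCz, hCeq x z hzx]
      exact hmemC x
    · have hmm := hrep_mem x hzx
      have heq := hCeq x (rep (C x)) hmm
      rw [heq]
      exact hmemC x
  set X' : Set H := (fun x => rep (C x)) '' X with hX'
  have hX'subX : X' ⊆ X := by
    rintro _ ⟨x, hx, rfl⟩
    show rep (C x) ∈ X
    by_cases hzx : z ∈ C x
    · have : rep (C x) = 1 := by simp [hrep, if_pos hzx]
      rw [this]; exact hX1
    · exact hCsubX x hx (hrep_mem x hzx)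
  have h1X' : (1 : H) ∈ X' := by
    refine ⟨1, hX1, ?_⟩
    have hzC1 : z ∈ C 1 := by rw [hC1G]; exact hzG
    simp [hrep, if_pos hzC1]
  have hzX' : z ∉ X' := by
    rintro ⟨x, hx, hrx⟩
    have hrx' : rep (C x) = z := hrx
    by_cases hzx : z ∈ C x
    · have : rep (C x) = 1 := by simp [hrep, if_pos hzx]
      rw [this] at hrx'
      exact hz hrx'.symm
    · exact hzx (hrx' ▸ hrep_mem x hzx)
  refine ⟨X', hX'subX, h1X', hzX', ?_⟩
  apply Set.Subset.antisymm
  · intro y hy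
    rcases Set.mem_mul.mp hy with ⟨a, ha, g, hg, rfl⟩
    exact hXG a (hX'subX ha) g hg
  · intro x hx
    obtain ⟨g, hg, hxg⟩ := hrep_coset x
    exact Set.mem_mul.mpr ⟨rep (C x), ⟨x, hx, rfl⟩, g, hg, hxg.symm⟩

lemma coset_decomp_right {z : H} {d : ℕ} (hz : z ≠ 1) (hd : 2 ≤ d) (h1 : z ^ d = 1)
    {X : Set H} (hX1 : (1 : H) ∈ X) (hXz : ∀ x ∈ X, z * x ∈ X) :
    ∃ X' : Set H, X' ⊆ X ∧ (1 : H) ∈ X' ∧ z ∉ X' ∧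
      (Set.range fun k : ℕ => z ^ k) * X' = X := by
  classical
  set G : Set H := Set.range fun k : ℕ => z ^ k with hG
  have hG1 : (1 : H) ∈ G := ⟨0, pow_zero z⟩
  have hzG : z ∈ G := ⟨1, pow_one z⟩
  have hGmul : ∀ g ∈ G, ∀ g' ∈ G, g * g' ∈ G := by
    rintro _ ⟨a, rfl⟩ _ ⟨b, rfl⟩
    exact ⟨a + b, pow_add z a b⟩
  have hGinv : ∀ g ∈ G, ∃ g' ∈ G, g * g' = 1 ∧ g' * g = 1 := by
    rintro _ ⟨a, rfl⟩
    obtain ⟨e, rfl⟩ : ∃ e, d = e + 1 := ⟨d - 1, by omega⟩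
    refine ⟨z ^ (a * e), ⟨a * e, rfl⟩, ?_, ?_⟩
    · rw [← pow_add, show a + a * e = (e + 1) * a by ring, pow_mul, h1, one_pow]
    · rw [← pow_add, show a * e + a = (e + 1) * a by ring, pow_mul, h1, one_pow]
  have hXG : ∀ x ∈ X, ∀ g ∈ G, g * x ∈ X := by
    rintro x hx _ ⟨k, rfl⟩
    induction k with
    | zero => simpa using hx
    | succ k ihk =>
      show z ^ (k + 1) * x ∈ X
      rw [pow_succ', mul_assoc]
      exact hXz _ ihk
  set C : H → Set H := fun x => {y | ∃ g ∈ G, y = g * x} with hC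
  have hmemC : ∀ x, x ∈ C x := fun x => ⟨1, hG1, (one_mul x).symm⟩
  have hCeq : ∀ x y, y ∈ C x → C y = C x := by
    rintro x y ⟨g, hg, rfl⟩
    apply Set.Subset.antisymm
    · rintro _ ⟨g', hg', rfl⟩
      exact ⟨g' * g, hGmul g' hg' g hg, (mul_assoc g' g x).symm⟩
    · rintro _ ⟨g₂, hg₂, rfl⟩
      obtain ⟨gi, hgi, _, hgig⟩ := hGinv g hg
      refine ⟨g₂ * gi, hGmul g₂ hg₂ gi hgi, ?_⟩
      have hgx : gi * (g * x) = x := by rw [← mul_assoc, hgig, one_mul]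
      rw [mul_assoc, hgx]
  have hC1G : C 1 = G := by
    ext y
    constructor
    · rintro ⟨g, hg, rfl⟩; rwa [mul_one]
    · intro hy; exact ⟨y, hy, (mul_one y).symm⟩
  have hCsubX : ∀ x ∈ X, C x ⊆ X := by
    rintro x hx _ ⟨g, hg, rfl⟩
    exact hXG x hx g hg
  set rep : Set H → H := fun c =>
    if z ∈ c then 1 else if hc : c.Nonempty then hc.some else 1 with hrep
  have hrep_mem : ∀ x, z ∉ C x → rep (C x) ∈ C x := by
    intro x hzx
    have hne : (C x).Nonempty := ⟨x, hmemC x⟩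
    simp only [hrep, if_neg hzx, dif_pos hne]
    exact hne.some_mem
  have hrep_coset : ∀ x, x ∈ C (rep (C x)) := by
    intro x
    by_cases hzx : z ∈ C x
    · have : rep (C x) = 1 := by simp [hrep, if_pos hzx]
      rw [this, hC1G]
      have hCz : C z = G := by
        rw [← hC1G]
        exact hCeq 1 z (by rw [hC1G]; exact hzG)
      rw [← hCz, hCeq x z hzx]
      exact hmemC x
    · have hmm := hrep_mem x hzx
      have heq := hCeq x (rep (C x)) hmm
      rw [heq]
      exact hmemC x
  set X' : Set H := (fun x => rep (C x)) '' X with hX'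
  have hX'subX : X' ⊆ X := by
    rintro _ ⟨x, hx, rfl⟩
    show rep (C x) ∈ X
    by_cases hzx : z ∈ C x
    · have : rep (C x) = 1 := by simp [hrep, if_pos hzx]
      rw [this]; exact hX1
    · exact hCsubX x hx (hrep_mem x hzx)
  have h1X' : (1 : H) ∈ X' := by
    refine ⟨1, hX1, ?_⟩
    have hzC1 : z ∈ C 1 := by rw [hC1G]; exact hzG
    simp [hrep, if_pos hzC1]
  have hzX' : z ∉ X' := by
    rintro ⟨x, hx, hrx⟩
    have hrx' : rep (C x) = z := hrx
    by_cases hzx : z ∈ C x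
    · have : rep (C x) = 1 := by simp [hrep, if_pos hzx]
      rw [this] at hrx'
      exact hz hrx'.symm
    · exact hzx (hrx' ▸ hrep_mem x hzx)
  refine ⟨X', hX'subX, h1X', hzX', ?_⟩
  apply Set.Subset.antisymm
  · intro y hy
    rcases Set.mem_mul.mp hy with ⟨g, hg, a, ha, rfl⟩
    exact hXG a (hX'subX ha) g hg
  · intro x hx
    obtain ⟨g, hg, hxg⟩ := hrep_coset x
    exact Set.mem_mul.mpr ⟨g, hg, rep (C x), ⟨x, hx, rfl⟩, hxg.symm⟩

lemma dbl_atom (hC1 : ¬ ∃ u : H, IsUnit u ∧ u ≠ 1 ∧ u * u = 1)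
    (hC2 : ∀ e : H, e * e = e → e = 1) {x : H} (hx : x ≠ 1) :
    IsAtomTS (Dbl x : PfinOne H) := by
  refine ⟨fun h => dbl_ne_one hx (pf_isUnit_iff.mp h), ?_⟩
  intro b c h
  have hb : (b : Set H) ⊆ {1, x} := by
    have := pf_subset_mul_left b c
    rw [← h, dbl_coe] at this
    exact this
  have hc : (c : Set H) ⊆ {1, x} := by
    have := pf_subset_mul_right b c
    rw [← h, dbl_coe] at this
    exact this
  rcases pf_subset_dbl hb with rfl | rfl
  · exact Or.inl isUnit_one
  rcases pf_subset_dbl hc with rfl | rfl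
  · exact Or.inr isUnit_one
  exfalso
  have hxx : x * x ∈ ((Dbl x * Dbl x : PfinOne H) : Set H) := by
    rw [pf_coe_mul, dbl_coe]
    exact Set.mul_mem_mul (Set.mem_insert_iff.mpr (Or.inr rfl))
      (Set.mem_insert_iff.mpr (Or.inr rfl))
  rw [← h, dbl_coe] at hxx
  rcases Set.mem_insert_iff.mp hxx with h1 | h2
  · exact hC1 ⟨x, ⟨⟨x, x, h1, h1⟩, rfl⟩, hx, h1⟩
  · exact hx (hC2 x (Set.mem_singleton_iff.mp h2))

lemma pf_exists_ne_one {Z : PfinOne H} (hZ : Z ≠ 1) : ∃ z ∈ (Z : Set H), z ≠ 1 := by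
  by_contra h
  push_neg at h
  apply hZ
  apply pf_eq_iff.mpr
  rw [pf_coe_one]
  exact Set.eq_singleton_iff_unique_mem.mpr ⟨pf_one_mem Z, h⟩

lemma main_atomic (hC1 : ¬ ∃ u : H, IsUnit u ∧ u ≠ 1 ∧ u * u = 1)
    (hC2 : ∀ e : H, e * e = e → e = 1) :
    ∀ n : ℕ, ∀ X : PfinOne H, (X : Set H).ncard ≤ n → X ≠ 1 →
      ∃ l : List (PfinOne H), l ≠ [] ∧ (∀ a ∈ l, IsAtomTS a) ∧ l.prod = X := by
  intro n
  induction n using Nat.strong_induction_on with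
  | _ n ih =>
  intro X hcard hX1
  by_cases hatom : ∀ Y Z : PfinOne H, X = Y * Z → Y = 1 ∨ Z = 1
  · refine ⟨[X], by simp, ?_, by simp⟩
    intro a ha
    rw [List.mem_singleton] at ha
    subst ha
    refine ⟨fun h => hX1 (pf_isUnit_iff.mp h), fun b c hbc => ?_⟩
    rcases hatom b c hbc with rfl | rfl
    · exact Or.inl isUnit_one
    · exact Or.inr isUnit_one
  · push_neg at hatom
    obtain ⟨Y, Z, hYZ, hY1, hZ1⟩ := hatom
    by_cases hYX : Y = X
    · -- X = X * Z : right-translation case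
      subst hYX
      obtain ⟨z, hzZ, hzne⟩ := pf_exists_ne_one hZ1
      have hmulset : (Y : Set H) * (Z : Set H) = (Y : Set H) := by
        rw [← pf_coe_mul, ← hYZ]
      have hXz : ∀ x ∈ (Y : Set H), x * z ∈ (Y : Set H) := by
        intro x hx
        rw [← hmulset]
        exact Set.mul_mem_mul hx hzZ
      have hzk : ∀ k : ℕ, z ^ k ∈ (Y : Set H) := by
        intro k
        induction k with
        | zero => simpa using pf_one_mem Y
        | succ k ihk => rw [pow_succ]; exact hXz _ ihk
      obtain ⟨d, hd2, hd1⟩ := exists_pow_eq_one hC2 hzne (pf_fin Y) hzk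
      obtain ⟨X', hX'sub, hX'1, hzX', hX'G⟩ :=
        coset_decomp_left hzne hd2 hd1 (pf_one_mem Y) hXz
      have hGfin := range_pow_finite (show 0 < d by omega) hd1
      have hGel1 : (1 : H) ∈ Set.range fun k : ℕ => z ^ k := ⟨0, pow_zero z⟩
      set Gel : PfinOne H := ⟨Set.range fun k : ℕ => z ^ k, hGfin, hGel1⟩ with hGel
      set X'el : PfinOne H := ⟨X', (pf_fin Y).subset hX'sub, hX'1⟩ with hX'el
      have hfact : Y = X'el * Gel := pf_eq_iff.mpr (by rw [pf_coe_mul]; exact hX'G.symm)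
      have hdblatom : IsAtomTS (Dbl z : PfinOne H) := dbl_atom hC1 hC2 hzne
      have hrep_prod : (List.replicate (d - 1) (Dbl z : PfinOne H)).prod = Gel := by
        rw [List.prod_replicate]
        apply pf_eq_iff.mpr
        rw [SubmonoidClass.coe_pow, dbl_coe]
        exact dbl_pow_eq_range hd2 hd1
      have hrepne : List.replicate (d - 1) (Dbl z : PfinOne H) ≠ [] := by
        apply List.ne_nil_of_length_pos
        rw [List.length_replicate]
        omega
      by_cases hX'one : X'el = 1
      · refine ⟨List.replicate (d - 1) (Dbl z), hrepne, ?_, ?_⟩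
        · intro a ha
          rw [List.eq_of_mem_replicate ha]
          exact hdblatom
        · rw [hrep_prod, hfact, hX'one, one_mul]
      · have hzX : z ∈ (Y : Set H) := by
          have := hXz 1 (pf_one_mem Y)
          rwa [one_mul] at this
        have hss : X' ⊂ (Y : Set H) :=
          Set.ssubset_iff_subset_ne.mpr ⟨hX'sub, fun h => hzX' (by rw [h]; exact hzX)⟩
        have hlt := Set.ncard_lt_ncard hss (pf_fin Y)
        obtain ⟨l', hne', hat', hprod'⟩ :=
          ih ((X'el : Set H).ncard) (lt_of_lt_of_le hlt hcard) X'el le_rfl hX'one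
        refine ⟨l' ++ List.replicate (d - 1) (Dbl z), ?_, ?_, ?_⟩
        · intro h
          exact hne' (List.append_eq_nil_iff.mp h).1
        · intro a ha
          rcases List.mem_append.mp ha with h | h
          · exact hat' a h
          · rw [List.eq_of_mem_replicate h]; exact hdblatom
        · rw [List.prod_append, hprod', hrep_prod]
          exact hfact.symm
    · by_cases hZX : Z = X
      · -- X = Y * X : left-translation case
        subst hZX
        obtain ⟨z, hzY, hzne⟩ := pf_exists_ne_one hY1
        have hmulset : (Y : Set H) * (Z : Set H) = (Z : Set H) := by
          rw [← pf_coe_mul, ← hYZ]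
        have hXz : ∀ x ∈ (Z : Set H), z * x ∈ (Z : Set H) := by
          intro x hx
          rw [← hmulset]
          exact Set.mul_mem_mul hzY hx
        have hzk : ∀ k : ℕ, z ^ k ∈ (Z : Set H) := by
          intro k
          induction k with
          | zero => simpa using pf_one_mem Z
          | succ k ihk => rw [pow_succ']; exact hXz _ ihk
        obtain ⟨d, hd2, hd1⟩ := exists_pow_eq_one hC2 hzne (pf_fin Z) hzk
        obtain ⟨X', hX'sub, hX'1, hzX', hX'G⟩ :=
          coset_decomp_right hzne hd2 hd1 (pf_one_mem Z) hXz
        have hGfin := range_pow_finite (show 0 < d by omega) hd1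
        have hGel1 : (1 : H) ∈ Set.range fun k : ℕ => z ^ k := ⟨0, pow_zero z⟩
        set Gel : PfinOne H := ⟨Set.range fun k : ℕ => z ^ k, hGfin, hGel1⟩ with hGel
        set X'el : PfinOne H := ⟨X', (pf_fin Z).subset hX'sub, hX'1⟩ with hX'el
        have hfact : Z = Gel * X'el := pf_eq_iff.mpr (by rw [pf_coe_mul]; exact hX'G.symm)
        have hdblatom : IsAtomTS (Dbl z : PfinOne H) := dbl_atom hC1 hC2 hzne
        have hrep_prod : (List.replicate (d - 1) (Dbl z : PfinOne H)).prod = Gel := by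
          rw [List.prod_replicate]
          apply pf_eq_iff.mpr
          rw [SubmonoidClass.coe_pow, dbl_coe]
          exact dbl_pow_eq_range hd2 hd1
        have hrepne : List.replicate (d - 1) (Dbl z : PfinOne H) ≠ [] := by
          apply List.ne_nil_of_length_pos
          rw [List.length_replicate]
          omega
        by_cases hX'one : X'el = 1
        · refine ⟨List.replicate (d - 1) (Dbl z), hrepne, ?_, ?_⟩
          · intro a ha
            rw [List.eq_of_mem_replicate ha]
            exact hdblatom
          · rw [hrep_prod, hfact, hX'one, mul_one]
        · have hzX : z ∈ (Z : Set H) := by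
            have := hXz 1 (pf_one_mem Z)
            rwa [mul_one] at this
          have hss : X' ⊂ (Z : Set H) :=
            Set.ssubset_iff_subset_ne.mpr ⟨hX'sub, fun h => hzX' (by rw [h]; exact hzX)⟩
          have hlt := Set.ncard_lt_ncard hss (pf_fin Z)
          obtain ⟨l', hne', hat', hprod'⟩ :=
            ih ((X'el : Set H).ncard) (lt_of_lt_of_le hlt hcard) X'el le_rfl hX'one
          refine ⟨List.replicate (d - 1) (Dbl z) ++ l', ?_, ?_, ?_⟩
          · intro h
            exact hne' (List.append_eq_nil_iff.mp h).2
          · intro a ha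
            rcases List.mem_append.mp ha with h | h
            · rw [List.eq_of_mem_replicate h]; exact hdblatom
            · exact hat' a h
          · rw [List.prod_append, hprod', hrep_prod]
            exact hfact.symm
      · -- both factors proper
        have hYss : (Y : Set H) ⊂ (X : Set H) :=
          Set.ssubset_iff_subset_ne.mpr
            ⟨by rw [hYZ]; exact pf_subset_mul_left Y Z, fun h => hYX (pf_eq_iff.mpr h)⟩
        have hZss : (Z : Set H) ⊂ (X : Set H) :=
          Set.ssubset_iff_subset_ne.mpr
            ⟨by rw [hYZ]; exact pf_subset_mul_right Y Z, fun h => hZX (pf_eq_iff.mpr h)⟩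
        have hYlt := Set.ncard_lt_ncard hYss (pf_fin X)
        have hZlt := Set.ncard_lt_ncard hZss (pf_fin X)
        obtain ⟨lY, hneY, hatY, hprodY⟩ :=
          ih ((Y : Set H).ncard) (lt_of_lt_of_le hYlt hcard) Y le_rfl hY1
        obtain ⟨lZ, hneZ, hatZ, hprodZ⟩ :=
          ih ((Z : Set H).ncard) (lt_of_lt_of_le hZlt hcard) Z le_rfl hZ1
        refine ⟨lY ++ lZ, ?_, ?_, ?_⟩
        · intro h
          exact hneY (List.append_eq_nil_iff.mp h).1
        · intro a ha
          rcases List.mem_append.mp ha with h | h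
          · exact hatY a h
          · exact hatZ a h
        · rw [List.prod_append, hprodY, hprodZ]
          exact hYZ.symm

end AuxPfinOne

/-- `P_{fin,1}(H)` is atomic iff `H` has no unit of order two and its only
idempotent is the identity. -/
theorem pfinOne_atomic_iff (H : Type*) [Monoid H] :
    AtomicM (PfinOne H) ↔
      (¬ ∃ u : H, IsUnit u ∧ u ≠ 1 ∧ u * u = 1) ∧ (∀ e : H, e * e = e → e = 1) := by
  constructor
  · intro hA
    constructor
    · rintro ⟨u, _, hune, huu⟩
      exact not_atomic_of_sq hune (Or.inl huu) hA
    · intro e he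
      by_contra hne
      exact not_atomic_of_sq hne (Or.inr he) hA
  · rintro ⟨hC1, hC2⟩
    intro X hX
    have hX1 : X ≠ 1 := fun h => hX (pf_unitDivisor_iff.mpr h)
    exact main_atomic hC1 hC2 ((X : Set H)).ncard X le_rfl hX1
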